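/- The only projection regular point set of n points in [0,1)^d that is closed under addition modulo 1 (i.e., forms a group under coordinatewise addition mod 1) and has the NNLD property is the diagonal set {0, (1/n)·1, (2/n)·1, …, ((n−1)/n)·1}. -/

import Mathlib

lemma stmt8_div_inj {n a b : ℕ} (hn : 0 < n) (h : (a:ℝ)/n = (b:ℝ)/n) : a = b := by
  have hnR : ((n:ℝ)) ≠ 0 := by positivity
  field_simp at h
  exact_mod_cast h

open Fin.NatCast Fin.CommRing in
lemma stmt8_key (d n : ℕ) (hn : 0 < n) (x : Fin n → Fin d → ℝ)
    (hx : ∀ i j, x i j ∈ Set.Ico (0:ℝ) 1)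
    (hreg : ∀ j, ∃ σ : Equiv.Perm (Fin n), ∀ i, x i j = (σ i : ℕ) / n)
    (hgroup : ∀ i i', ∃ k, ∀ j, x k j = Int.fract (x i j + x i' j))
    (hnnld : ∀ z : Fin d → ℝ, (∀ j, z j ∈ Set.Icc (0:ℝ) 1) →
      ∏ j, z j ≤ (Nat.card {i : Fin n // ∀ j, x i j < z j} : ℝ) / n) :
    ∀ i j j', x i j = x i j' := by
  intro i0 j j'
  by_cases hjj : j = j'
  · rw [hjj]
  haveI : NeZero n := ⟨hn.ne'⟩
  obtain ⟨σ, hσ⟩ := hreg j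
  obtain ⟨σ', hσ'⟩ := hreg j'
  rcases eq_or_lt_of_le (show 1 ≤ n from hn) with h1 | hn2
  · rw [hσ, hσ']
    have : σ i0 = σ' i0 := by subst h1; exact Subsingleton.elim _ _
    rw [this]
  have hnR : (0:ℝ) < n := by exact_mod_cast hn
  set ψ : Fin n → Fin n := fun k => σ' (σ.symm k) with hψdef
  have hψinj : Function.Injective ψ := σ'.injective.comp σ.symm.injective
  have hadd : ∀ k k' : Fin n, ψ (k + k') = ψ k + ψ k' := by
    intro k k'
    obtain ⟨m, hm⟩ := hgroup (σ.symm k) (σ.symm k')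
    have hfr : ∀ a b : Fin n,
        Int.fract (((a:ℕ):ℝ)/n + ((b:ℕ):ℝ)/n) = (((a + b : Fin n) : ℕ) : ℝ)/n := by
      intro a b
      rw [Fin.val_add, ← add_div, ← Nat.cast_add, Int.fract_div_natCast_eq_div_natCast_mod]
    have hmj : x m j = (((k + k' : Fin n) : ℕ) : ℝ)/n := by
      rw [hm j, hσ, hσ, Equiv.apply_symm_apply, Equiv.apply_symm_apply, hfr]
    rw [hσ] at hmj
    have hmval : σ m = k + k' := Fin.ext (stmt8_div_inj hn hmj)
    have hm' : m = σ.symm (k + k') := by rw [← hmval, Equiv.symm_apply_apply]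
    have hmj' : x m j' = (((ψ k + ψ k' : Fin n) : ℕ) : ℝ)/n := by
      rw [hm j', hσ', hσ', hfr]
    rw [hσ', hm'] at hmj'
    exact Fin.ext (stmt8_div_inj hn hmj')
  have hψ0 : ψ 0 = 0 := by
    have h00 := hadd 0 0
    rw [add_zero] at h00
    exact (left_eq_add.mp h00)
  obtain ⟨c, hcdef⟩ : ∃ c : ℕ, c = (ψ 1).val := ⟨_, rfl⟩
  have hψcast : ∀ m : ℕ, ψ (m : Fin n) = ((m * c : ℕ) : Fin n) := by
    intro m
    induction m with
    | zero => simpa using hψ0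
    | succ m ih =>
      have hcast : ((m+1 : ℕ) : Fin n) = (m : Fin n) + 1 := by push_cast; ring
      rw [hcast, hadd, ih]
      have h1 : ψ 1 = ((c : ℕ) : Fin n) := by rw [hcdef, Fin.cast_val_eq_self]
      rw [h1, ← Nat.cast_add]
      congr 1
      ring
  have hψval : ∀ k : Fin n, (ψ k).val = (k.val * c) % n := by
    intro k
    conv_lhs => rw [← Fin.cast_val_eq_self k]
    rw [hψcast, Fin.val_natCast]
  have hclt : c < n := hcdef ▸ (ψ 1).isLt
  have hc1 : 1 ≤ c := by
    rcases Nat.eq_zero_or_pos c with h0 | h; swap; · exact h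
    exfalso
    have h10 : ψ 1 = ψ 0 := by
      rw [hψ0]
      exact Fin.ext (by rw [Fin.val_zero, ← hcdef, h0])
    have h10' := hψinj h10
    have hv : (1 : Fin n).val = (0 : Fin n).val := by rw [h10']
    rw [Fin.val_one', Fin.val_zero, Nat.mod_eq_of_lt hn2] at hv
    exact one_ne_zero hv
  have hcop : Nat.Coprime c n := by
    by_contra hg
    obtain ⟨g, hgdef⟩ : ∃ g : ℕ, g = Nat.gcd c n := ⟨_, rfl⟩
    have hgc : g ∣ c := hgdef ▸ Nat.gcd_dvd_left _ _
    have hgn : g ∣ n := hgdef ▸ Nat.gcd_dvd_right _ _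
    have hg1 : 1 < g := by
      rcases Nat.lt_or_ge g 2 with h | h
      · interval_cases g
        · exact absurd (Nat.eq_zero_of_gcd_eq_zero_right hgdef.symm) hn.ne'
        · exact absurd hgdef.symm hg
      · omega
    obtain ⟨m, hmdef⟩ : ∃ m : ℕ, m = n / g := ⟨_, rfl⟩
    have hm1 : 1 ≤ m := hmdef ▸ (Nat.one_le_div_iff (by omega)).mpr (Nat.le_of_dvd hn hgn)
    have hmlt : m < n := hmdef ▸ Nat.div_lt_self hn hg1
    obtain ⟨c', hc'⟩ := hgc
    have hdvd : n ∣ m * c := ⟨c', by rw [hc', hmdef, ← mul_assoc, Nat.div_mul_cancel hgn]⟩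
    have hmc0 : (m * c) % n = 0 := by
      obtain ⟨w, hw⟩ := hdvd
      rw [hw, Nat.mul_mod_right]
    have hmc : ψ ((m : ℕ) : Fin n) = ψ 0 := by
      rw [hψcast, hψ0]
      exact Fin.ext (by rw [Fin.val_natCast, Fin.val_zero, hmc0])
    have hm0 := hψinj hmc
    have : m % n = 0 := by
      have h := congrArg Fin.val hm0
      rw [Fin.val_natCast, Fin.val_zero] at h
      exact h
    rw [Nat.mod_eq_of_lt hmlt] at this
    omega
  have hc : c = 1 := by
    by_contra hcne
    have hc2 : 2 ≤ c := by omega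
    obtain ⟨t, htdef⟩ : ∃ t : ℕ, t = (n - 1) / c := ⟨_, rfl⟩
    have ht1 : 1 ≤ t := htdef ▸ (Nat.one_le_div_iff (by omega)).mpr (by omega)
    have htc : t * c ≤ n - 1 := by rw [htdef]; exact Nat.div_mul_le_self _ _
    have htn : t ≤ n - 1 := htdef ▸ Nat.div_le_self _ _
    have htub : n - 1 < (t + 1) * c := by
      have h1 := Nat.div_add_mod (n - 1) c
      have h2 := Nat.mod_lt (n - 1) (show 0 < c by omega)
      calc n - 1 = c * ((n-1)/c) + (n-1) % c := h1.symm
        _ < c * ((n-1)/c) + c := by omega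
        _ = (((n-1)/c) + 1) * c := by ring
        _ = (t + 1) * c := by rw [htdef]
    set z : Fin d → ℝ := fun m =>
      if m = j then ((t+1 : ℕ) : ℝ)/n else if m = j' then ((t*c : ℕ) : ℝ)/n else 1 with hzdef
    have hzj : z j = ((t+1 : ℕ) : ℝ)/n := by simp [hzdef]
    have hzj' : z j' = ((t*c : ℕ) : ℝ)/n := by simp [hzdef, Ne.symm hjj]
    have hzIcc : ∀ m, z m ∈ Set.Icc (0:ℝ) 1 := by
      intro m
      rw [hzdef]
      dsimp only
      split_ifs with h1 h2
      · exact ⟨by positivity, by rw [div_le_one hnR]; exact_mod_cast (show t + 1 ≤ n by omega)⟩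
      · exact ⟨by positivity, by rw [div_le_one hnR]; exact_mod_cast (show t * c ≤ n by omega)⟩
      · exact ⟨zero_le_one, le_refl 1⟩
    have hprod : ∏ m, z m = (((t+1 : ℕ) : ℝ)/n) * (((t*c : ℕ) : ℝ)/n) := by
      rw [← Finset.prod_subset (Finset.subset_univ ({j, j'} : Finset (Fin d)))]
      · rw [Finset.prod_pair hjj, hzj, hzj']
      · intro m _ hm
        simp only [Finset.mem_insert, Finset.mem_singleton, not_or] at hm
        simp [hzdef, hm.1, hm.2]
    have hpred : ∀ i : Fin n, (∀ m, x i m < z m) ↔ (σ i).val < t := by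
      intro i
      have hxij' : x i j' = (((σ i).val * c % n : ℕ) : ℝ)/n := by
        rw [hσ']
        have hs : σ' i = ψ (σ i) := by rw [hψdef]; simp
        rw [hs, hψval]
      constructor
      · intro h
        have h1 := h j
        rw [hσ, hzj] at h1
        have hkt : (σ i).val < t + 1 := by
          have := (div_lt_div_iff_of_pos_right hnR).mp h1
          exact_mod_cast this
        have h2 := h j'
        rw [hxij', hzj'] at h2
        have hk2 : (σ i).val * c % n < t * c := by
          have := (div_lt_div_iff_of_pos_right hnR).mp h2
          exact_mod_cast this
        have hle : (σ i).val * c ≤ t * c := Nat.mul_le_mul_right c (by omega)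
        rw [Nat.mod_eq_of_lt (by omega)] at hk2
        exact Nat.lt_of_mul_lt_mul_right hk2
      · intro hk m
        rcases eq_or_ne m j with h1 | h1
        · rw [h1, hσ, hzj]
          apply div_lt_div_of_pos_right ?_ hnR
          exact_mod_cast (show (σ i).val < t + 1 by omega)
        rcases eq_or_ne m j' with h2 | h2
        · rw [h2, hxij', hzj']
          apply div_lt_div_of_pos_right ?_ hnR
          have hlt : (σ i).val * c < t * c :=
            (Nat.mul_lt_mul_right (show 0 < c by omega)).mpr hk
          rw [Nat.mod_eq_of_lt (by omega)]
          exact_mod_cast hlt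
        · have : z m = 1 := by simp [hzdef, h1, h2]
          rw [this]
          exact (hx i m).2
    have hcard : Nat.card {i : Fin n // ∀ m, x i m < z m} = t := by
      have e1 : {i : Fin n // ∀ m, x i m < z m} ≃ {i : Fin n // (σ i).val < t} :=
        Equiv.subtypeEquivRight hpred
      have e2 : {i : Fin n // (σ i).val < t} ≃ {k : Fin n // k.val < t} :=
        σ.subtypeEquiv (fun i => Iff.rfl)
      have e3 : {k : Fin n // k.val < t} ≃ Fin t :=
        { toFun := fun k => ⟨k.1.val, k.2⟩
          invFun := fun m => ⟨⟨m.val, lt_of_lt_of_le m.2 (by omega)⟩, m.2⟩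
          left_inv := fun k => rfl
          right_inv := fun m => rfl }
      rw [Nat.card_congr (e1.trans (e2.trans e3)), Nat.card_eq_fintype_card, Fintype.card_fin]
    have hfin := hnnld z hzIcc
    rw [hprod, hcard] at hfin
    rw [div_mul_div_comm, div_le_div_iff₀ (by positivity) hnR] at hfin
    have hnat : (t+1) * (t*c) * n ≤ t * (n * n) := by exact_mod_cast hfin
    have hkey : (t+1) * c ≤ n := by
      have h3 : ((t+1) * c) * (t * n) ≤ n * (t * n) := by
        calc ((t+1) * c) * (t * n) = (t+1) * (t*c) * n := by ring
          _ ≤ t * (n * n) := hnat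
          _ = n * (t * n) := by ring
      exact Nat.le_of_mul_le_mul_right h3 (Nat.mul_pos (by omega) hn)
    have hneq : n = (t+1) * c := by omega
    have hdvd : c ∣ n := ⟨t + 1, by rw [hneq]; ring⟩
    have := hcop.eq_one_of_dvd hdvd
    omega
  rw [hσ, hσ']
  have hs : σ' i0 = ψ (σ i0) := by rw [hψdef]; simp
  rw [hs]
  have hv : (ψ (σ i0)).val = (σ i0).val := by
    rw [hψval, hc, mul_one, Nat.mod_eq_of_lt (σ i0).isLt]
  rw [hv]


/-- The only projection regular point set of `n` points in `[0,1)^d` that is closed under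
coordinatewise addition modulo 1 and has the NNLD property is the diagonal set
`{0, (1/n)·1, …, ((n-1)/n)·1}`. -/
theorem stmt8 (d n : ℕ) (hn : 0 < n) (x : Fin n → Fin d → ℝ)
    (hx : ∀ i j, x i j ∈ Set.Ico (0:ℝ) 1)
    (hreg : ∀ j, ∃ σ : Equiv.Perm (Fin n), ∀ i, x i j = (σ i : ℕ) / n)
    (hgroup : ∀ i i', ∃ k, ∀ j, x k j = Int.fract (x i j + x i' j))
    (hnnld : ∀ z : Fin d → ℝ, (∀ j, z j ∈ Set.Icc (0:ℝ) 1) →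
      ∏ j, z j ≤ (Nat.card {i : Fin n // ∀ j, x i j < z j} : ℝ) / n) :
    Set.range x = Set.range (fun k : Fin n => fun _ : Fin d => (k : ℝ) / n) := by
  have key := stmt8_key d n hn x hx hreg hgroup hnnld
  rcases Nat.eq_zero_or_pos d with hd | hd
  · subst hd
    ext f
    simp only [Set.mem_range]
    constructor
    · rintro ⟨i, rfl⟩
      exact ⟨⟨0, hn⟩, by funext j; exact j.elim0⟩
    · rintro ⟨k, rfl⟩
      exact ⟨⟨0, hn⟩, by funext j; exact j.elim0⟩
  · have j0 : Fin d := ⟨0, hd⟩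
    obtain ⟨σ, hσ⟩ := hreg j0
    ext f
    simp only [Set.mem_range]
    constructor
    · rintro ⟨i, rfl⟩
      refine ⟨σ i, ?_⟩
      funext j
      show ((σ i : ℕ) : ℝ) / n = x i j
      rw [key i j j0, hσ]
    · rintro ⟨k, rfl⟩
      refine ⟨σ.symm k, ?_⟩
      funext j
      show x (σ.symm k) j = ((k : ℕ) : ℝ) / n
      rw [key (σ.symm k) j j0, hσ, Equiv.apply_symm_apply]
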